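/- For all sufficiently small ε > 0, the polynomial g_ε(x) = -x^3 + 6x^2(1-εx) - 11x(1-εx) + 6(1-εx)^2 has at least three distinct zeros in the interval (0, 1/ε), with g_ε' negative at two of them and positive at one of them. -/

import Mathlib

set_option maxHeartbeats 1000000 in

theorem lifted_schlogl_three_equilibria :
    ∃ ε₀ : ℝ, 0 < ε₀ ∧ ∀ ε : ℝ, 0 < ε → ε < ε₀ →
      let g : ℝ → ℝ := fun x => -x^3 + 6*x^2*(1 - ε*x) - 11*x*(1 - ε*x) + 6*(1 - ε*x)^2
      ∃ x₁ x₂ x₃ : ℝ,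
        x₁ ∈ Set.Ioo 0 (1/ε) ∧ x₂ ∈ Set.Ioo 0 (1/ε) ∧ x₃ ∈ Set.Ioo 0 (1/ε) ∧
        x₁ ≠ x₂ ∧ x₁ ≠ x₃ ∧ x₂ ≠ x₃ ∧
        g x₁ = 0 ∧ g x₂ = 0 ∧ g x₃ = 0 ∧
        deriv g x₁ < 0 ∧ deriv g x₃ < 0 ∧ deriv g x₂ > 0 := by
  refine ⟨1/1000, by norm_num, ?_⟩
  intro ε hε hε' g
  have hgdef : g = fun x => -x^3 + 6*x^2*(1 - ε*x) - 11*x*(1 - ε*x) + 6*(1 - ε*x)^2 := rfl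
  -- derivative
  have hg : ∀ y : ℝ, HasDerivAt g
      (-3*y^2 + 12*y - 11 - ε*(18*y^2 - 22*y + 12) + 12*ε^2*y) y := by
    intro y
    have hlin : HasDerivAt (fun x : ℝ => 1 - ε*x) (-ε) y := by
      simpa using ((hasDerivAt_id y).const_mul ε).const_sub 1
    have h1 : HasDerivAt (fun x : ℝ => x^3) (3*y^2) y := by simpa using hasDerivAt_pow 3 y
    have h2 : HasDerivAt (fun x : ℝ => x^2) (2*y) y := by simpa using hasDerivAt_pow 2 y
    have h3 : HasDerivAt (fun x : ℝ => 6*x^2) (6*(2*y)) y := h2.const_mul 6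
    have h4 : HasDerivAt (fun x : ℝ => 6*x^2*(1-ε*x)) (6*(2*y)*(1-ε*y) + 6*y^2*(-ε)) y :=
      h3.mul hlin
    have h5 : HasDerivAt (fun x : ℝ => 11*x) 11 y := by
      simpa using (hasDerivAt_id y).const_mul 11
    have h6 : HasDerivAt (fun x : ℝ => 11*x*(1-ε*x)) (11*(1-ε*y) + 11*y*(-ε)) y := h5.mul hlin
    have h7 : HasDerivAt (fun x : ℝ => (1-ε*x)^2) ((2:ℕ)*(1-ε*y)^(2-1)*(-ε)) y := hlin.pow 2
    have h8 := h7.const_mul 6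
    have h9 := ((h1.neg.add h4).sub h6).add h8
    rw [hgdef]
    refine h9.congr_deriv ?_
    push_cast
    ring
  have hc : Continuous g := by
    rw [hgdef]; continuity
  have h1ε : (31/10 : ℝ) < 1/ε := by
    rw [lt_div_iff₀ hε]; nlinarith
  -- sign values
  have s1 : 0 < g (9/10) := by rw [hgdef]; nlinarith [sq_nonneg ε]
  have s2 : g (11/10) < 0 := by rw [hgdef]; nlinarith [sq_nonneg ε]
  have s3 : g (19/10) < 0 := by rw [hgdef]; nlinarith [sq_nonneg ε]
  have s4 : 0 < g (21/10) := by rw [hgdef]; nlinarith [sq_nonneg ε]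
  have s5 : 0 < g (29/10) := by rw [hgdef]; nlinarith [sq_nonneg ε]
  have s6 : g (31/10) < 0 := by rw [hgdef]; nlinarith [sq_nonneg ε]
  obtain ⟨x₁, hx₁, hgx₁⟩ := intermediate_value_Ioo' (by norm_num : (9/10:ℝ) ≤ 11/10)
    (hc.continuousOn) (Set.mem_Ioo.mpr ⟨s2, s1⟩)
  obtain ⟨x₂, hx₂, hgx₂⟩ := intermediate_value_Ioo (by norm_num : (19/10:ℝ) ≤ 21/10)
    (hc.continuousOn) (Set.mem_Ioo.mpr ⟨s3, s4⟩)
  obtain ⟨x₃, hx₃, hgx₃⟩ := intermediate_value_Ioo' (by norm_num : (29/10:ℝ) ≤ 31/10)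
    (hc.continuousOn) (Set.mem_Ioo.mpr ⟨s6, s5⟩)
  obtain ⟨ha₁, hb₁⟩ := hx₁
  obtain ⟨ha₂, hb₂⟩ := hx₂
  obtain ⟨ha₃, hb₃⟩ := hx₃
  refine ⟨x₁, x₂, x₃, ⟨by linarith, by linarith⟩, ⟨by linarith, by linarith⟩,
    ⟨by linarith, by linarith⟩, by linarith, by linarith, by linarith,
    hgx₁, hgx₂, hgx₃, ?_, ?_, ?_⟩
  · rw [(hg x₁).deriv]
    nlinarith [mul_nonneg (by linarith : (0:ℝ) ≤ x₁ - 9/10) (by linarith : (0:ℝ) ≤ 11/10 - x₁),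
      mul_pos hε hε, sq_nonneg ε]
  · rw [(hg x₃).deriv]
    nlinarith [mul_nonneg (by linarith : (0:ℝ) ≤ x₃ - 29/10) (by linarith : (0:ℝ) ≤ 31/10 - x₃),
      mul_pos hε hε, sq_nonneg ε]
  · rw [(hg x₂).deriv]
    nlinarith [mul_nonneg (by linarith : (0:ℝ) ≤ x₂ - 19/10) (by linarith : (0:ℝ) ≤ 21/10 - x₂),
      mul_pos hε hε, sq_nonneg ε]
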